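/- arXiv:2301.06446 — 2 statements merged into one kernel-verified Lean document; each statement's English description precedes it below -/
import Mathlib

section
/- Let m ≡ 1 (mod 6) with m ≥ 7, n = 2^m − 1, and v = 2^{(m−1)/2} − 1. Then gcd(v, n) = 1, and for every integer a with 1 ≤ a ≤ 2^{(m−1)/2} + 2, the binary weight of (a·v mod n) is congruent to 0 modulo 3. -/
def w2 (x : ℕ) : ℕ := (Nat.digits 2 x).sum

lemma w2_add_pow_mul {k b : ℕ} (c : ℕ) (hb : b < 2 ^ k) :
    w2 (b + 2 ^ k * c) = w2 b + w2 c := by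
  rcases Nat.eq_zero_or_pos c with rfl | hc
  · simp [w2]
  have hlen : (Nat.digits 2 b).length ≤ k := by
    rcases Nat.eq_zero_or_pos b with rfl | hb0
    · simp
    rw [Nat.digits_len 2 b one_lt_two hb0.ne']
    have := Nat.log_lt_of_lt_pow hb0.ne' hb
    omega
  have h := Nat.digits_append_zeroes_append_digits (b := 2)
    (k := k - (Nat.digits 2 b).length) (m := c) (n := b) one_lt_two hc
  rw [Nat.add_sub_cancel' hlen] at h
  unfold w2
  rw [← h]
  simp

lemma w2_two_mul_add {b : ℕ} (hb : b < 2) (c : ℕ) : w2 (b + 2 * c) = b + w2 c := by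
  have := w2_add_pow_mul (k := 1) (b := b) c (by simpa using hb)
  simp only [pow_one] at this
  rw [this]
  interval_cases b <;> simp [w2]

lemma w2_pow_sub_one (k : ℕ) : w2 (2 ^ k - 1) = k := by
  induction k with
  | zero => simp [w2]
  | succ k ih =>
    have h2 : 1 ≤ 2 ^ k := Nat.one_le_two_pow
    have : 2 ^ (k + 1) - 1 = 1 + 2 * (2 ^ k - 1) := by
      rw [pow_succ]; omega
    rw [this, w2_two_mul_add (by norm_num), ih]
    omega

lemma w2_compl {k : ℕ} : ∀ x, x < 2 ^ k → w2 x + w2 (2 ^ k - 1 - x) = k := by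
  induction k with
  | zero => intro x hx; interval_cases x; simp [w2]
  | succ k ih =>
    intro x hx
    obtain ⟨q, r, hr, rfl⟩ : ∃ q r, r < 2 ∧ x = r + 2 * q :=
      ⟨x / 2, x % 2, by omega, by omega⟩
    have hq : q < 2 ^ k := by
      have : 2 ^ (k + 1) = 2 * 2 ^ k := by ring
      omega
    have hc : 2 ^ (k + 1) - 1 - (r + 2 * q) = (1 - r) + 2 * (2 ^ k - 1 - q) := by
      have h1 : 2 ^ (k + 1) = 2 * 2 ^ k := by ring
      have h2 : 1 ≤ 2 ^ k := Nat.one_le_two_pow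
      omega
    rw [hc]
    rw [w2_two_mul_add hr]
    rw [w2_two_mul_add (show 1 - r < 2 by omega)]
    have := ih q hq
    omega

theorem stmt3 (m : ℕ) (hm : m % 6 = 1) (hm7 : 7 ≤ m)
    (n v : ℕ) (hn : n = 2 ^ m - 1) (hv : v = 2 ^ ((m - 1) / 2) - 1) :
    Nat.gcd v n = 1 ∧
    ∀ a : ℕ, 1 ≤ a → a ≤ 2 ^ ((m - 1) / 2) + 2 → w2 (a * v % n) % 3 = 0 := by
  set k := (m - 1) / 2 with hk
  have hmk : m = 2 * k + 1 := by omega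
  have hk3 : k % 3 = 0 := by omega
  have hkge : 3 ≤ k := by omega
  have hpk8 : (8 : ℕ) ≤ 2 ^ k := by
    calc (8 : ℕ) = 2 ^ 3 := by norm_num
    _ ≤ 2 ^ k := Nat.pow_le_pow_right (by norm_num) hkge
  obtain ⟨P, hP⟩ : ∃ P, 2 ^ k = P + 1 := ⟨2 ^ k - 1, by omega⟩
  have hP7 : 7 ≤ P := by omega
  have hpm : 2 ^ m = 2 * (2 ^ k * 2 ^ k) := by
    rw [hmk, pow_succ, two_mul, pow_add]; ring
  have hvP : v = P := by rw [hv, hP]; omega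
  have hnP : n = 2 * (P * P) + 4 * P + 1 := by
    rw [hn, hpm, hP]
    have : (P + 1) * (P + 1) = P * P + 2 * P + 1 := by ring
    omega
  have hnv : n = 2 * (2 ^ k + 1) * v + 1 := by
    rw [hnP, hvP, hP]; ring
  constructor
  · rw [Nat.gcd_rec, hnv]
    have hv2 : 1 < v := by omega
    have heq : 2 * (2 ^ k + 1) * v + 1 = 1 + 2 * (2 ^ k + 1) * v := by ring
    rw [heq, Nat.add_mul_mod_self_right, Nat.mod_eq_of_lt hv2, Nat.gcd_one_left]
  · intro a ha1 ha2
    have havlt : a * v < n := by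
      have h1 : a * v ≤ (P + 3) * P := by
        rw [hvP]; exact Nat.mul_le_mul_right P (by omega)
      have h2 : (P + 3) * P = P * P + 3 * P := by ring
      omega
    rw [Nat.mod_eq_of_lt havlt]
    rcases Nat.lt_or_ge a (2 ^ k + 1) with hle | hgt
    · -- 1 ≤ a ≤ 2 ^ k
      set x := a - 1 with hx
      have hxlt : x < 2 ^ k := by omega
      have hav : a * v = (2 ^ k - 1 - x) + 2 ^ k * x := by
        rw [hvP, hP]
        have hax : a = x + 1 := by omega
        rw [hax]
        have h1 : (x + 1) * P = x * P + P := by ring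
        have h2 : (P + 1) * x = x * P + x := by ring
        omega
      rw [hav, w2_add_pow_mul x (by omega)]
      have := w2_compl x hxlt
      omega
    rcases Nat.eq_or_lt_of_le hgt with heq | hgt2
    · -- a = 2 ^ k + 1
      have hav : a * v = 2 ^ (2 * k) - 1 := by
        rw [← heq, hvP, hP, two_mul, pow_add, hP]
        have h1 : (P + 1 + 1) * P = P * P + 2 * P := by ring
        have h2 : (P + 1) * (P + 1) = P * P + 2 * P + 1 := by ring
        omega
      rw [hav, w2_pow_sub_one]
      omega
    · -- a = 2 ^ k + 2
      have ha : a = 2 ^ k + 2 := by omega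
      have hsplit : a * v = (2 ^ k - 2) + 2 ^ k * 2 ^ k := by
        rw [ha, hvP, hP]
        have h1 : (P + 1 + 2) * P = P * P + 3 * P := by ring
        have h2 : (P + 1) * (P + 1) = P * P + 2 * P + 1 := by ring
        omega
      rw [hsplit, w2_add_pow_mul (2 ^ k) (by omega)]
      have hw1 : w2 (2 ^ k) = 1 := by
        have h := w2_add_pow_mul (k := k) (b := 0) 1 (by positivity)
        simpa [w2] using h
      have hks : 2 ^ k = 2 * 2 ^ (k - 1) := by
        rw [← pow_succ']; congr 1; omega
      have hQ : 1 ≤ 2 ^ (k - 1) := Nat.one_le_two_pow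
      have h1 : w2 (2 ^ k - 2) = k - 1 := by
        have h0 : 2 ^ k - 2 = 0 + 2 * (2 ^ (k - 1) - 1) := by omega
        rw [h0, w2_two_mul_add (by norm_num), w2_pow_sub_one]
        omega
      rw [hw1, h1]
      omega
end

section
/- Let m ≡ 3 (mod 6) with m ≥ 9 and n = 2^m − 1. For i ∈ {0,1,2}, define T_i = { 1 ≤ j ≤ n−1 : w₂(j) ≡ i (mod 3) }. Then |T_0| = (2^m − 8)/3 and |T_1| = |T_2| = (2^m + 1)/3. -/
lemma w2_zero : w2 0 = 0 := by simp [w2]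

lemma w2_rec (j : ℕ) : w2 j = j % 2 + w2 (j / 2) := by
  rcases Nat.eq_zero_or_pos j with h | h
  · simp [h, w2]
  · rw [w2, Nat.digits_def' (by norm_num : 1 < 2) h]; simp [w2]

lemma w2_pow_add (m : ℕ) : ∀ j < 2 ^ m, w2 (2 ^ m + j) = w2 j + 1 := by
  induction m with
  | zero =>
    intro j hj
    have : j = 0 := by omega
    subst this
    rw [w2_zero]; simp [w2]
  | succ m ih =>
    intro j hj
    rw [w2_rec (2 ^ (m+1) + j)]
    have hp : (0:ℕ) < 2 ^ m := Nat.pow_pos (by norm_num)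
    have h1 : (2 ^ (m+1) + j) % 2 = j % 2 := by
      rw [pow_succ] at *; omega
    have h2 : (2 ^ (m+1) + j) / 2 = 2 ^ m + j / 2 := by
      rw [pow_succ] at *; omega
    rw [h1, h2, ih (j/2) (by rw [pow_succ] at hj; omega), ← Nat.add_assoc, ← w2_rec]

lemma w2_pred_pow (m : ℕ) : w2 (2 ^ m - 1) = m := by
  induction m with
  | zero => simpa using w2_zero
  | succ m ih =>
    have hp : (0:ℕ) < 2 ^ m := Nat.pow_pos (by norm_num)
    have h : 2 ^ (m+1) - 1 = 2 ^ m + (2 ^ m - 1) := by rw [pow_succ]; omega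
    rw [h, w2_pow_add m _ (by omega), ih]

def c (i m : ℕ) : ℕ := ((Finset.range (2 ^ m)).filter (fun j => w2 j % 3 = i)).card

lemma c_rec (i : ℕ) (hi : i < 3) (m : ℕ) : c i (m+1) = c i m + c ((i+2) % 3) m := by
  unfold c
  have hsplit : Finset.range (2 ^ (m+1)) =
      Finset.range (2 ^ m) ∪ (Finset.range (2 ^ m)).map
        ⟨fun j => 2 ^ m + j, add_right_injective (2 ^ m)⟩ := by
    ext x
    simp only [Finset.mem_range, Finset.mem_union, Finset.mem_map, Function.Embedding.coeFn_mk]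
    rw [pow_succ]
    constructor
    · intro h
      rcases Nat.lt_or_ge x (2 ^ m) with h' | h'
      · exact Or.inl h'
      · exact Or.inr ⟨x - 2 ^ m, by omega, by omega⟩
    · rintro (h | ⟨a, ha, rfl⟩) <;> omega
  have hdisj : Disjoint (Finset.range (2 ^ m))
      ((Finset.range (2 ^ m)).map ⟨fun j => 2 ^ m + j, add_right_injective (2 ^ m)⟩) := by
    rw [Finset.disjoint_left]
    intro x hx hx'
    simp only [Finset.mem_range] at hx
    simp only [Finset.mem_map, Function.Embedding.coeFn_mk] at hx'
    obtain ⟨a, _, rfl⟩ := hx'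
    omega
  rw [hsplit, Finset.filter_union,
    Finset.card_union_of_disjoint (Finset.disjoint_filter_filter hdisj),
    Finset.filter_map, Finset.card_map]
  congr 1
  rw [Finset.filter_congr (q := fun j => w2 j % 3 = (i+2) % 3)]
  intro x hx
  simp only [Finset.mem_range] at hx
  simp only [Function.comp, Function.Embedding.coeFn_mk, w2_pow_add m x hx]
  omega

lemma c_base0 : c 0 3 = 2 := by
  norm_num [c, Finset.range_add_one, Finset.filter_insert, Finset.filter_singleton, w2]
lemma c_base1 : c 1 3 = 3 := by
  norm_num [c, Finset.range_add_one, Finset.filter_insert, Finset.filter_singleton, w2]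
lemma c_base2 : c 2 3 = 3 := by
  norm_num [c, Finset.range_add_one, Finset.filter_insert, Finset.filter_singleton, w2]

lemma c_formula (k : ℕ) : 3 * c 0 (6*k+3) + 2 = 2^(6*k+3) ∧
    3 * c 1 (6*k+3) = 2^(6*k+3) + 1 ∧ 3 * c 2 (6*k+3) = 2^(6*k+3) + 1 := by
  induction k with
  | zero => norm_num [c_base0, c_base1, c_base2]
  | succ k ih =>
    obtain ⟨h0, h1, h2⟩ := ih
    set M := 6*k+3 with hM
    have r0 : ∀ N, c 0 (N+1) = c 0 N + c 2 N := fun N => by simpa using c_rec 0 (by norm_num) N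
    have r1 : ∀ N, c 1 (N+1) = c 1 N + c 0 N := fun N => by simpa using c_rec 1 (by norm_num) N
    have r2 : ∀ N, c 2 (N+1) = c 2 N + c 1 N := fun N => by simpa using c_rec 2 (by norm_num) N
    have h6 : 6*(k+1)+3 = M+6 := by omega
    rw [h6]
    have hpow : (2:ℕ)^(M+6) = 64 * 2^M := by rw [pow_add]; ring
    have h00 : c 0 (M+1) = c 0 M + c 2 M := r0 M
    have h01 : c 1 (M+1) = c 1 M + c 0 M := r1 M
    have h02 : c 2 (M+1) = c 2 M + c 1 M := r2 M
    have h10 : c 0 (M+2) = c 0 (M+1) + c 2 (M+1) := r0 (M+1)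
    have h11 : c 1 (M+2) = c 1 (M+1) + c 0 (M+1) := r1 (M+1)
    have h12 : c 2 (M+2) = c 2 (M+1) + c 1 (M+1) := r2 (M+1)
    have h20 : c 0 (M+3) = c 0 (M+2) + c 2 (M+2) := r0 (M+2)
    have h21 : c 1 (M+3) = c 1 (M+2) + c 0 (M+2) := r1 (M+2)
    have h22 : c 2 (M+3) = c 2 (M+2) + c 1 (M+2) := r2 (M+2)
    have h30 : c 0 (M+4) = c 0 (M+3) + c 2 (M+3) := r0 (M+3)
    have h31 : c 1 (M+4) = c 1 (M+3) + c 0 (M+3) := r1 (M+3)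
    have h32 : c 2 (M+4) = c 2 (M+3) + c 1 (M+3) := r2 (M+3)
    have h40 : c 0 (M+5) = c 0 (M+4) + c 2 (M+4) := r0 (M+4)
    have h41 : c 1 (M+5) = c 1 (M+4) + c 0 (M+4) := r1 (M+4)
    have h42 : c 2 (M+5) = c 2 (M+4) + c 1 (M+4) := r2 (M+4)
    have h50 : c 0 (M+6) = c 0 (M+5) + c 2 (M+5) := r0 (M+5)
    have h51 : c 1 (M+6) = c 1 (M+5) + c 0 (M+5) := r1 (M+5)
    have h52 : c 2 (M+6) = c 2 (M+5) + c 1 (M+5) := r2 (M+5)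
    refine ⟨by omega, by omega, by omega⟩

theorem stmt11 (m : ℕ) (hm : m % 6 = 3) (hm9 : 9 ≤ m) (n : ℕ) (hn : n = 2 ^ m - 1) :
    let T : ℕ → Finset ℕ := fun i => (Finset.Icc 1 (n - 1)).filter (fun j => w2 j % 3 = i)
    (T 0).card = (2 ^ m - 8) / 3 ∧ (T 1).card = (2 ^ m + 1) / 3 ∧
    (T 2).card = (2 ^ m + 1) / 3 := by
  intro T
  obtain ⟨k, hk⟩ : ∃ k, m = 6 * k + 3 := ⟨m / 6, by omega⟩
  have hbig : 512 ≤ 2 ^ m := by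
    calc (512:ℕ) = 2 ^ 9 := by norm_num
    _ ≤ 2 ^ m := Nat.pow_le_pow_right (by norm_num) hm9
  have hn1 : n - 1 = 2 ^ m - 2 := by omega
  have hset : Finset.range (2 ^ m) =
      insert 0 (insert (2 ^ m - 1) (Finset.Icc 1 (2 ^ m - 2))) := by
    ext x
    simp only [Finset.mem_range, Finset.mem_insert, Finset.mem_Icc]
    omega
  have h0mem : (0:ℕ) ∉ insert (2 ^ m - 1) (Finset.Icc 1 (2 ^ m - 2)) := by
    simp only [Finset.mem_insert, Finset.mem_Icc]
    omega
  have h1mem : 2 ^ m - 1 ∉ Finset.Icc 1 (2 ^ m - 2) := by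
    simp only [Finset.mem_Icc]
    omega
  have hw0 : w2 0 % 3 = 0 := by rw [w2_zero]
  have hw1 : w2 (2 ^ m - 1) % 3 = 0 := by rw [w2_pred_pow]; omega
  have key : ∀ i, c i m = ((Finset.Icc 1 (2 ^ m - 2)).filter (fun j => w2 j % 3 = i)).card
      + (if w2 0 % 3 = i then 1 else 0) + (if w2 (2 ^ m - 1) % 3 = i then 1 else 0) := by
    intro i
    rw [c, hset, Finset.filter_insert, Finset.filter_insert]
    split <;> split
    · rw [Finset.card_insert_of_notMem (by
        simp only [Finset.mem_insert, Finset.mem_filter, Finset.mem_Icc]; omega),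
        Finset.card_insert_of_notMem (by simp only [Finset.mem_filter]; tauto)]
    · rw [Finset.card_insert_of_notMem (by
        simp only [Finset.mem_filter]
        intro h
        exact h0mem (Finset.mem_insert_of_mem h.1))]
    · rw [Finset.card_insert_of_notMem (by simp only [Finset.mem_filter]; tauto)]
    · rfl
  have k0 := key 0
  have k1 := key 1
  have k2 := key 2
  rw [hw0, hw1] at k0 k1 k2
  norm_num at k0 k1 k2
  obtain ⟨H0, H1, H2⟩ := c_formula k
  rw [← hk] at H0 H1 H2
  refine ⟨?_, ?_, ?_⟩
  · show ((Finset.Icc 1 (n-1)).filter (fun j => w2 j % 3 = 0)).card = (2 ^ m - 8) / 3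
    rw [hn1]
    omega
  · show ((Finset.Icc 1 (n-1)).filter (fun j => w2 j % 3 = 1)).card = (2 ^ m + 1) / 3
    rw [hn1]
    omega
  · show ((Finset.Icc 1 (n-1)).filter (fun j => w2 j % 3 = 2)).card = (2 ^ m + 1) / 3
    rw [hn1]
    omega
end
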